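/- Let Q_ε be a symmetric positive definite N×N matrix, p ∈ ℝ^N, and Ω₁ = {w ∈ ℝ^N : w ≥ 0, wᵀ1 = 1, ‖w‖₀ ≤ m}, Ω = {v ∈ ℝ^N : v ≥ 0, ‖v‖₀ ≤ m}. Suppose there exists w̃ ∈ Ω₁ with pᵀw̃ > 0. If v̂ maximizes S(w) = pᵀw / √(wᵀQ_ε w) over Ω₁, then the rescaled vector (pᵀv̂ / (v̂ᵀQ_ε v̂)) · v̂ minimizes f(v) = ½ vᵀQ_ε v − pᵀv over Ω. -/

import Mathlib

open Matrix Finset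

theorem stmt_0 (N m : ℕ) (Q : Matrix (Fin N) (Fin N) ℝ) (hQ : Q.PosDef)
    (p : Fin N → ℝ)
    (Ω₁ Ω : Set (Fin N → ℝ))
    (hΩ₁ : Ω₁ = {w | (∀ i, 0 ≤ w i) ∧ (∑ i, w i) = 1 ∧
        (Finset.univ.filter fun i => w i ≠ 0).card ≤ m})
    (hΩ : Ω = {v | (∀ i, 0 ≤ v i) ∧ (Finset.univ.filter fun i => v i ≠ 0).card ≤ m})
    (hexist : ∃ w ∈ Ω₁, 0 < p ⬝ᵥ w)
    (vh : Fin N → ℝ) (hv : vh ∈ Ω₁)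
    (hmax : ∀ w ∈ Ω₁,
      p ⬝ᵥ w / Real.sqrt (w ⬝ᵥ Q.mulVec w) ≤ p ⬝ᵥ vh / Real.sqrt (vh ⬝ᵥ Q.mulVec vh)) :
    (p ⬝ᵥ vh / (vh ⬝ᵥ Q.mulVec vh)) • vh ∈ Ω ∧
    ∀ v ∈ Ω,
      (1/2) * (((p ⬝ᵥ vh / (vh ⬝ᵥ Q.mulVec vh)) • vh) ⬝ᵥ Q.mulVec ((p ⬝ᵥ vh / (vh ⬝ᵥ Q.mulVec vh)) • vh))
        - p ⬝ᵥ ((p ⬝ᵥ vh / (vh ⬝ᵥ Q.mulVec vh)) • vh)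
      ≤ (1/2) * (v ⬝ᵥ Q.mulVec v) - p ⬝ᵥ v := by
  subst hΩ₁ hΩ
  obtain ⟨hv0, hvsum, hvcard⟩ := hv
  have hpos : ∀ x : Fin N → ℝ, x ≠ 0 → 0 < x ⬝ᵥ Q.mulVec x := by
    intro x hx
    have := hQ.dotProduct_mulVec_pos hx
    simpa using this
  have hvne : vh ≠ 0 := by
    intro h; rw [h] at hvsum; simp at hvsum
  have hq : 0 < vh ⬝ᵥ Q.mulVec vh := hpos vh hvne
  have hsq : 0 < Real.sqrt (vh ⬝ᵥ Q.mulVec vh) := Real.sqrt_pos.2 hq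
  -- p ⬝ᵥ vh > 0
  obtain ⟨w, hw, hpw⟩ := hexist
  have hwne : w ≠ 0 := by
    intro h; rw [h] at hw; simp at hw
  have hSw : 0 < p ⬝ᵥ w / Real.sqrt (w ⬝ᵥ Q.mulVec w) :=
    div_pos hpw (Real.sqrt_pos.2 (hpos w hwne))
  have hS : 0 < p ⬝ᵥ vh / Real.sqrt (vh ⬝ᵥ Q.mulVec vh) :=
    lt_of_lt_of_le hSw (hmax w hw)
  have hpv : 0 < p ⬝ᵥ vh := by
    have := mul_pos hS hsq
    rwa [div_mul_cancel₀ _ (ne_of_gt hsq)] at this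
  set c : ℝ := p ⬝ᵥ vh / (vh ⬝ᵥ Q.mulVec vh) with hc
  have hcpos : 0 < c := div_pos hpv hq
  set b0 : ℝ := p ⬝ᵥ vh with hb0
  set q : ℝ := vh ⬝ᵥ Q.mulVec vh with hqdef
  constructor
  · refine ⟨fun i => mul_nonneg hcpos.le (hv0 i), ?_⟩
    have : (Finset.univ.filter fun i => (c • vh) i ≠ 0) =
        (Finset.univ.filter fun i => vh i ≠ 0) := by
      apply Finset.filter_congr
      intro i _
      simp [Pi.smul_apply, smul_eq_mul, mul_ne_zero_iff, ne_of_gt hcpos]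
    rw [this]; exact hvcard
  · intro v hvΩ
    obtain ⟨hv0', hvcard'⟩ := hvΩ
    have hLHS : (1/2) * ((c • vh) ⬝ᵥ Q.mulVec (c • vh)) - p ⬝ᵥ (c • vh)
        = -(1/2) * (b0^2 / q) := by
      rw [Matrix.mulVec_smul, dotProduct_smul, smul_dotProduct, dotProduct_smul]
      simp only [smul_eq_mul, ← hqdef, ← hb0, hc]
      field_simp
      ring
    rw [hLHS]
    rcases eq_or_ne v 0 with rfl | hvne'
    · simp only [dotProduct_zero, Matrix.mulVec_zero]
      have : 0 ≤ b0^2 / q := div_nonneg (sq_nonneg _) hq.le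
      nlinarith
    · have ha : 0 < v ⬝ᵥ Q.mulVec v := hpos v hvne'
      set a : ℝ := v ⬝ᵥ Q.mulVec v with hadef
      set b : ℝ := p ⬝ᵥ v with hbdef
      rcases le_or_gt b 0 with hb | hb
      · have : 0 ≤ b0^2 / q := div_nonneg (sq_nonneg _) hq.le
        nlinarith
      · -- scale v to the simplex
        have hsum : 0 < ∑ i, v i := by
          rcases Function.ne_iff.1 hvne' with ⟨i, hi⟩
          have : 0 < v i := lt_of_le_of_ne (hv0' i) (Ne.symm hi)
          exact Finset.sum_pos' (fun j _ => hv0' j) ⟨i, Finset.mem_univ i, this⟩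
        set s : ℝ := ∑ i, v i with hsdef
        have hsne : s ≠ 0 := ne_of_gt hsum
        have hwmem : s⁻¹ • v ∈ {w : Fin N → ℝ | (∀ i, 0 ≤ w i) ∧ (∑ i, w i) = 1 ∧
            (Finset.univ.filter fun i => w i ≠ 0).card ≤ m} := by
          refine ⟨fun i => mul_nonneg (inv_nonneg.2 hsum.le) (hv0' i), ?_, ?_⟩
          · simp only [Pi.smul_apply, smul_eq_mul, ← Finset.mul_sum]
            exact inv_mul_cancel₀ hsne
          · have : (Finset.univ.filter fun i => (s⁻¹ • v) i ≠ 0) =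
                (Finset.univ.filter fun i => v i ≠ 0) := by
              apply Finset.filter_congr
              intro i _
              simp [Pi.smul_apply, smul_eq_mul, mul_ne_zero_iff, inv_ne_zero hsne]
            rw [this]; exact hvcard'
        have hkey := hmax _ hwmem
        -- rewrite the ratio for s⁻¹ • v
        have hdot1 : p ⬝ᵥ (s⁻¹ • v) = s⁻¹ * b := by
          rw [dotProduct_smul]; simp [hbdef]
        have hdot2 : (s⁻¹ • v) ⬝ᵥ Q.mulVec (s⁻¹ • v) = s⁻¹^2 * a := by
          simp only [Matrix.mulVec_smul, dotProduct_smul, smul_dotProduct, smul_eq_mul]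
          rw [← hadef]; ring
        rw [hdot1, hdot2] at hkey
        have hsqrt : Real.sqrt (s⁻¹^2 * a) = s⁻¹ * Real.sqrt a := by
          rw [Real.sqrt_mul (sq_nonneg _), Real.sqrt_sq (inv_nonneg.2 hsum.le)]
        rw [hsqrt] at hkey
        have hsa : 0 < Real.sqrt a := Real.sqrt_pos.2 ha
        have hkey2 : b / Real.sqrt a ≤ b0 / Real.sqrt q := by
          have hsinv : 0 < s⁻¹ := inv_pos.2 hsum
          calc b / Real.sqrt a = (s⁻¹ * b) / (s⁻¹ * Real.sqrt a) := by
                rw [mul_div_mul_left _ _ (ne_of_gt hsinv)]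
            _ ≤ b0 / Real.sqrt q := hkey
        -- conclude via nlinarith
        have hsa2 : Real.sqrt a ^ 2 = a := Real.sq_sqrt ha.le
        have hsq2 : Real.sqrt q ^ 2 = q := Real.sq_sqrt hq.le
        have hbb : b * Real.sqrt q ≤ b0 * Real.sqrt a := by
          rw [div_le_div_iff₀ hsa hsq] at hkey2
          linarith
        have key : 2 * b * q ≤ a * q + b0^2 := by
          nlinarith [sq_nonneg (Real.sqrt a * Real.sqrt q - b0), mul_pos hsa hsq]
        clear_value a b q b0 c s
        have h2 : 2 * b - a ≤ b0^2 / q := by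
          rw [le_div_iff₀ hq]; linarith [key]
        linarith
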